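/- Under the same code length, the OCKM distortion is at most the CKM distortion: if C ≥ 1 and M is divisible by C, then f_ock(M/C, K, C) ≤ f_ck(M, K), where OCKM uses M' = M/C subspaces each of dimension C·(P/M). -/

import Mathlib

open Matrix

/-- A vector in `ℝ^K` is one-hot if exactly one entry equals 1 and all others are 0. -/
def IsOneHot {K : ℕ} (b : Fin K → ℝ) : Prop :=
  ∃ k : Fin K, b k = 1 ∧ ∀ k' : Fin K, k' ≠ k → b k' = 0

/-- Squared Euclidean distance. -/
noncomputable def sqDist {P : ℕ} (x y : Fin P → ℝ) : ℝ := ∑ p, (x p - y p) ^ 2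

/-- Concatenation of `m` subvectors of dimension `S` into a vector of dimension `P = m * S`. -/
noncomputable def concatV {m S P : ℕ} (h : m * S = P) (v : Fin m → Fin S → ℝ) :
    Fin P → ℝ :=
  fun p =>
    v (finProdFinEquiv.symm (Fin.cast h.symm p)).1
      (finProdFinEquiv.symm (Fin.cast h.symm p)).2

/-- The Cartesian K-means distortion `f_ck(m, K)`: the infimum over orthogonal `R`,
sub codebooks `D^j ∈ ℝ^{(P/m) × K}` and one-hot vectors `b_i^j` of
`∑ i ‖x_i - R v_i‖²` where `v_i` concatenates the `D^j b_i^j`. -/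
noncomputable def fCK (N P : ℕ) (x : Fin N → Fin P → ℝ) (m K : ℕ) (hm : m ∣ P) : ℝ :=
  sInf { t : ℝ |
    ∃ (R : Matrix (Fin P) (Fin P) ℝ)
      (D : Fin m → Matrix (Fin (P / m)) (Fin K) ℝ)
      (b : Fin N → Fin m → Fin K → ℝ),
      Rᵀ * R = 1 ∧ (∀ i j, IsOneHot (b i j)) ∧
      t = ∑ i, sqDist (x i)
            (R *ᵥ concatV (Nat.mul_div_cancel' hm) (fun j => D j *ᵥ b i j)) }

/-- The optimized Cartesian K-means distortion `f_ock(m, K, C)`: the infimum over orthogonal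
`R`, sub codebooks `D^{j,c} ∈ ℝ^{(P/m) × K}` and one-hot vectors `b_i^{j,c}` of
`∑ i ‖x_i - R v_i‖²` where `v_i` concatenates the `∑_c D^{j,c} b_i^{j,c}`. -/
noncomputable def fOCK (N P : ℕ) (x : Fin N → Fin P → ℝ) (m K C : ℕ) (hm : m ∣ P) : ℝ :=
  sInf { t : ℝ |
    ∃ (R : Matrix (Fin P) (Fin P) ℝ)
      (D : Fin m → Fin C → Matrix (Fin (P / m)) (Fin K) ℝ)
      (b : Fin N → Fin m → Fin C → Fin K → ℝ),
      Rᵀ * R = 1 ∧ (∀ i j c, IsOneHot (b i j c)) ∧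
      t = ∑ i, sqDist (x i)
            (R *ᵥ concatV (Nat.mul_div_cancel' hm) (fun j => ∑ c, D j c *ᵥ b i j c)) }

/-- Theorem 2, Eqn. (17): under the same code length, `f_ock(M/C, K, C) ≤ f_ck(M, K)`,
where OCKM uses `M' = M/C` subspaces each of dimension `C * (P/M)`. -/
theorem ockm_le_ckm_same_code_length (N P K M C : ℕ) (hN : 0 < N) (hP : 0 < P) (hK : 0 < K)
    (hM : 0 < M) (hC : 0 < C) (hMP : M ∣ P) (hCM : C ∣ M) (x : Fin N → Fin P → ℝ) :
    fOCK N P x (M / C) K C ((Nat.div_dvd_of_dvd hCM).trans hMP) ≤ fCK N P x M K hMP := by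
  have hm' : (M / C) ∣ P := (Nat.div_dvd_of_dvd hCM).trans hMP
  have hSpos : 0 < P / M := Nat.div_pos (Nat.le_of_dvd hP hMP) hM
  -- P / (M/C) = C * (P/M)
  have hS' : P / (M / C) = C * (P / M) := by
    have hm'pos : 0 < M / C := Nat.div_pos (Nat.le_of_dvd hM hCM) hC
    have : P = (M / C) * (C * (P / M)) := by
      rw [← mul_assoc, Nat.div_mul_cancel hCM, Nat.mul_div_cancel' hMP]
    conv_lhs => rw [this]
    rw [Nat.mul_div_cancel_left _ hm'pos]
  apply csInf_le_csInf
  · refine ⟨0, fun t ht => ?_⟩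
    obtain ⟨R, D, b, hR, hb, rfl⟩ := ht
    apply Finset.sum_nonneg
    intro i _
    apply Finset.sum_nonneg
    intro p _
    positivity
  · refine ⟨_, 1, fun _ => 0, fun _ _ k => if k = ⟨0, hK⟩ then 1 else 0, ?_, ?_, rfl⟩
    · simp
    · intro i j
      exact ⟨⟨0, hK⟩, by simp, fun k' hk' => by simp [hk']⟩
  · rintro t ⟨R, D, b, hR, hb, rfl⟩
    set emb : Fin (M / C) → Fin C → Fin M :=
      fun j' c => Fin.cast (Nat.div_mul_cancel hCM) (finProdFinEquiv (j', c)) with hemb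
    have hembv : ∀ j' c, ((emb j' c : Fin M) : ℕ) = (c : ℕ) + C * (j' : ℕ) := by
      intro j' c; simp [hemb, finProdFinEquiv]
    set D' : Fin (M / C) → Fin C → Matrix (Fin (P / (M / C))) (Fin K) ℝ :=
      fun j' c => fun s k =>
        if ((s : ℕ) / (P / M) = (c : ℕ)) then
          D (emb j' c) ⟨(s : ℕ) % (P / M), Nat.mod_lt _ hSpos⟩ k else 0 with hD'
    refine ⟨R, D', fun i j' c => b i (emb j' c), hR, fun i j' c => hb i (emb j' c), ?_⟩
    refine Finset.sum_congr rfl fun i _ => ?_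
    have hconcat : concatV (Nat.mul_div_cancel' hMP) (fun j => D j *ᵥ b i j)
        = concatV (Nat.mul_div_cancel' hm')
            (fun j' => ∑ c, D' j' c *ᵥ b i (emb j' c)) := by
      funext p
      simp only [concatV, finProdFinEquiv_symm_apply]
      set a : ℕ := (p : ℕ) with ha
      have hkey : a / (P / M) = (a % (C * (P / M))) / (P / M)
          + C * (a / (C * (P / M))) := by
        conv_lhs => rw [← Nat.mod_add_div a (C * (P / M))]
        rw [mul_comm C (P / M), mul_assoc, Nat.add_mul_div_left _ _ hSpos]
      set q1 := (Fin.cast (Nat.mul_div_cancel' hm').symm p).divNat with hq1d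
      set q2 := (Fin.cast (Nat.mul_div_cancel' hm').symm p).modNat with hq2d
      set r1 := (Fin.cast (Nat.mul_div_cancel' hMP).symm p).divNat with hr1d
      set r2 := (Fin.cast (Nat.mul_div_cancel' hMP).symm p).modNat with hr2d
      have hq2 : (q2 : ℕ) = a % (C * (P / M)) := by
        rw [hq2d, Fin.coe_modNat]; rw [← hS']; rfl
      have hq1 : (q1 : ℕ) = a / (C * (P / M)) := by
        rw [hq1d, Fin.coe_divNat]; rw [← hS']; rfl
      have hr2 : (r2 : ℕ) = a % (P / M) := by rw [hr2d, Fin.coe_modNat]; rfl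
      have hr1 : (r1 : ℕ) = a / (P / M) := by rw [hr1d, Fin.coe_divNat]; rfl
      have hc0lt : (q2 : ℕ) / (P / M) < C := by
        rw [hq2]
        apply Nat.div_lt_of_lt_mul
        rw [mul_comm (P / M) C]
        exact Nat.mod_lt _ (by positivity)
      set c0 : Fin C := ⟨(q2 : ℕ) / (P / M), hc0lt⟩ with hc0
      have hsum : ∀ c : Fin C, (D' q1 c *ᵥ b i (emb q1 c)) q2
          = if c = c0 then
              (D (emb q1 c0) *ᵥ b i (emb q1 c0)) ⟨(q2 : ℕ) % (P / M), Nat.mod_lt _ hSpos⟩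
            else 0 := by
        intro c
        by_cases h : c = c0
        · subst h
          simp only [if_pos rfl, hD', Matrix.mulVec, dotProduct]
          simp [hc0]
        · rw [if_neg h]
          simp only [hD', Matrix.mulVec, dotProduct]
          apply Finset.sum_eq_zero
          intro k _
          rw [if_neg, zero_mul]
          intro hcon
          exact h (Fin.ext hcon.symm)
      have hRHS : (∑ c, D' q1 c *ᵥ b i (emb q1 c)) q2
          = (D (emb q1 c0) *ᵥ b i (emb q1 c0))
              ⟨(q2 : ℕ) % (P / M), Nat.mod_lt _ hSpos⟩ := by
        rw [Finset.sum_apply]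
        rw [Finset.sum_congr rfl (fun c _ => hsum c)]
        simp
      show (D r1 *ᵥ b i r1) r2 = (∑ c, D' q1 c *ᵥ b i (emb q1 c)) q2
      rw [hRHS]
      have he : emb q1 c0 = r1 := by
        apply Fin.ext
        rw [hembv, hr1, hkey, hc0]
        simp [hq1, hq2]
      have hi : (⟨(q2 : ℕ) % (P / M), Nat.mod_lt _ hSpos⟩ : Fin (P / M)) = r2 := by
        apply Fin.ext
        simp only [hq2, hr2]
        exact Nat.mod_mod_of_dvd a (dvd_mul_left (P / M) C)
      rw [he, hi]
    rw [hconcat]
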